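/- arXiv:2304.03488 — 12 statements merged into one kernel-verified Lean document; each statement's English description precedes it below -/
import Mathlib

section
/- Let α ∈ ℝ, let b : ℝ → ℝ be continuously differentiable, and let φ : ℝ² → ℝ, φ = φ(t,s), be twice continuously differentiable with φ_s(t,s) > 0 for all (t,s), satisfying the one-dimensional SMHD equation in Lagrangian coordinates φ_tt − α² φ_ss + ∂_s(1/φ_s²) − b′(φ) = 0. Then the local conservation law of momentum holds identically: ∂_t(φ_t φ_s) − ∂_s( (φ_t² + α² φ_s²)/2 − 2/φ_s + b(φ) ) = 0 for all (t,s). -/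
/-- Partial derivative with respect to the first (time) variable. -/
noncomputable def pt (f : ℝ → ℝ → ℝ) (t s : ℝ) : ℝ := deriv (fun t' => f t' s) t

/-- Partial derivative with respect to the second (space) variable. -/
noncomputable def ps (f : ℝ → ℝ → ℝ) (t s : ℝ) : ℝ := deriv (fun s' => f t s') s


private lemma line_t {G : ℝ × ℝ → ℝ} {t s : ℝ} (h : DifferentiableAt ℝ G (t, s)) :
    HasDerivAt (fun t' => G (t', s)) (fderiv ℝ G (t, s) (1, 0)) t := by
  have h1 : HasDerivAt (fun t' : ℝ => ((t' : ℝ), s)) ((1 : ℝ), (0 : ℝ)) t :=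
    (hasDerivAt_id t).prodMk (hasDerivAt_const t s)
  exact h.hasFDerivAt.comp_hasDerivAt t h1

private lemma line_s {G : ℝ × ℝ → ℝ} {t s : ℝ} (h : DifferentiableAt ℝ G (t, s)) :
    HasDerivAt (fun s' => G (t, s')) (fderiv ℝ G (t, s) (0, 1)) s := by
  have h1 : HasDerivAt (fun s' : ℝ => (t, (s' : ℝ))) ((0 : ℝ), (1 : ℝ)) s :=
    (hasDerivAt_const s t).prodMk (hasDerivAt_id s)
  exact h.hasFDerivAt.comp_hasDerivAt s h1

/-- momentum conservation law for the 1D SMHD equation in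
Lagrangian coordinates with arbitrary bottom topography. -/
theorem smhd_momentum_conservation
    (α : ℝ) (b : ℝ → ℝ) (hb : ContDiff ℝ 1 b)
    (φ : ℝ → ℝ → ℝ)
    (hφ : ContDiff ℝ 2 (fun p : ℝ × ℝ => φ p.1 p.2))
    (hpos : ∀ t s, 0 < ps φ t s)
    (hpde : ∀ t s,
      pt (pt φ) t s - α ^ 2 * ps (ps φ) t s
        + ps (fun t s => 1 / (ps φ t s) ^ 2) t s - deriv b (φ t s) = 0) :
    ∀ t s,
      pt (fun t s => pt φ t s * ps φ t s) t s
        - ps (fun t s =>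
            ((pt φ t s) ^ 2 + α ^ 2 * (ps φ t s) ^ 2) / 2
              - 2 / ps φ t s + b (φ t s)) t s = 0 := by
  intro t s
  set Φ : ℝ × ℝ → ℝ := fun p => φ p.1 p.2 with hΦdef
  have hΦd : Differentiable ℝ Φ := hφ.differentiable two_ne_zero
  have hF : ContDiff ℝ 1 (fderiv ℝ Φ) := hφ.fderiv_right (by norm_num)
  have hFd : Differentiable ℝ (fderiv ℝ Φ) := hF.differentiable one_ne_zero
  set a : ℝ × ℝ → ℝ := fun p => fderiv ℝ Φ p (1, 0) with hadef
  set bb : ℝ × ℝ → ℝ := fun p => fderiv ℝ Φ p (0, 1) with hbbdef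
  have hfa : ∀ p : ℝ × ℝ, HasFDerivAt a
      ((ContinuousLinearMap.apply ℝ ℝ ((1 : ℝ), (0 : ℝ))).comp (fderiv ℝ (fderiv ℝ Φ) p)) p :=
    fun p => (ContinuousLinearMap.apply ℝ ℝ ((1 : ℝ), (0 : ℝ))).hasFDerivAt.comp p (hFd p).hasFDerivAt
  have hfb : ∀ p : ℝ × ℝ, HasFDerivAt bb
      ((ContinuousLinearMap.apply ℝ ℝ ((0 : ℝ), (1 : ℝ))).comp (fderiv ℝ (fderiv ℝ Φ) p)) p :=
    fun p => (ContinuousLinearMap.apply ℝ ℝ ((0 : ℝ), (1 : ℝ))).hasFDerivAt.comp p (hFd p).hasFDerivAt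
  set H := fderiv ℝ (fderiv ℝ Φ) (t, s) with hHdef
  have h_at : HasDerivAt (fun t' => a (t', s)) (H (1, 0) (1, 0)) t := by
    simpa using line_t (hfa (t, s)).differentiableAt |>.congr_deriv (by
      rw [(hfa (t, s)).fderiv]; simp; rfl)
  have h_as : HasDerivAt (fun s' => a (t, s')) (H (0, 1) (1, 0)) s := by
    simpa using line_s (hfa (t, s)).differentiableAt |>.congr_deriv (by
      rw [(hfa (t, s)).fderiv]; simp; rfl)
  have h_bt : HasDerivAt (fun t' => bb (t', s)) (H (1, 0) (0, 1)) t := by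
    simpa using line_t (hfb (t, s)).differentiableAt |>.congr_deriv (by
      rw [(hfb (t, s)).fderiv]; simp; rfl)
  have h_bs : HasDerivAt (fun s' => bb (t, s')) (H (0, 1) (0, 1)) s := by
    simpa using line_s (hfb (t, s)).differentiableAt |>.congr_deriv (by
      rw [(hfb (t, s)).fderiv]; simp; rfl)
  have h_phis : HasDerivAt (fun s' => φ t s') (bb (t, s)) s := line_s (hΦd (t, s))
  -- symmetry of second derivative
  have hsymm : H (1, 0) (0, 1) = H (0, 1) (1, 0) :=
    second_derivative_symmetric (fun y => (hΦd y).hasFDerivAt) ((hFd (t, s)).hasFDerivAt) _ _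
  -- pt φ = a, ps φ = bb
  have hpt : ∀ t' s', pt φ t' s' = a (t', s') := fun t' s' =>
    (line_t (G := Φ) (hΦd (t', s'))).deriv
  have hps : ∀ t' s', ps φ t' s' = bb (t', s') := fun t' s' =>
    (line_s (G := Φ) (hΦd (t', s'))).deriv
  have hBpos : 0 < bb (t, s) := by rw [← hps]; exact hpos t s
  have hBne : bb (t, s) ≠ 0 := ne_of_gt hBpos
  -- derivative of b at φ t s
  have hb' : HasDerivAt b (deriv b (φ t s)) (φ t s) :=
    ((hb.differentiable one_ne_zero) (φ t s)).hasDerivAt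
  -- rewrite the PDE
  have pde : H (1, 0) (1, 0) - α ^ 2 * H (0, 1) (0, 1)
      + (0 * bb (t, s) ^ 2 - 1 * (↑2 * bb (t, s) ^ 1 * H (0, 1) (0, 1))) / (bb (t, s) ^ 2) ^ 2
      - deriv b (φ t s) = 0 := by
    have e1 : pt (pt φ) t s = H (1, 0) (1, 0) := by
      have : (fun t' => pt φ t' s) = fun t' => a (t', s) := funext fun t' => hpt t' s
      show deriv (fun t' => pt φ t' s) t = _
      rw [this]; exact h_at.deriv
    have e2 : ps (ps φ) t s = H (0, 1) (0, 1) := by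
      have : (fun s' => ps φ t s') = fun s' => bb (t, s') := funext fun s' => hps t s'
      show deriv (fun s' => ps φ t s') s = _
      rw [this]; exact h_bs.deriv
    have e3 : ps (fun t s => 1 / (ps φ t s) ^ 2) t s
        = (0 * bb (t, s) ^ 2 - 1 * (↑2 * bb (t, s) ^ 1 * H (0, 1) (0, 1))) / (bb (t, s) ^ 2) ^ 2 := by
      have hfun : (fun s' => 1 / (ps φ t s') ^ 2) = fun s' => 1 / (bb (t, s')) ^ 2 :=
        funext fun s' => by rw [hps]
      show deriv (fun s' => 1 / (ps φ t s') ^ 2) s = _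
      rw [hfun]
      exact ((hasDerivAt_const s (1 : ℝ)).div (h_bs.pow 2) (pow_ne_zero 2 hBne)).deriv
    have := hpde t s
    rw [e1, e2, e3] at this
    exact this
  -- rewrite the goal
  have g1 : pt (fun t s => pt φ t s * ps φ t s) t s
      = H (1, 0) (1, 0) * bb (t, s) + a (t, s) * H (1, 0) (0, 1) := by
    have hfun : (fun t' => pt φ t' s * ps φ t' s) = fun t' => a (t', s) * bb (t', s) :=
      funext fun t' => by rw [hpt, hps]
    show deriv (fun t' => pt φ t' s * ps φ t' s) t = _
    rw [hfun]
    exact (h_at.mul h_bt).deriv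
  have g2 : ps (fun t s =>
        ((pt φ t s) ^ 2 + α ^ 2 * (ps φ t s) ^ 2) / 2 - 2 / ps φ t s + b (φ t s)) t s
      = ((↑2 * a (t, s) ^ 1 * H (0, 1) (1, 0)
            + α ^ 2 * (↑2 * bb (t, s) ^ 1 * H (0, 1) (0, 1))) / 2
          - (0 * bb (t, s) - 2 * H (0, 1) (0, 1)) / bb (t, s) ^ 2)
          + deriv b (φ t s) * bb (t, s) := by
    have hfun : (fun s' => ((pt φ t s') ^ 2 + α ^ 2 * (ps φ t s') ^ 2) / 2
          - 2 / ps φ t s' + b (φ t s'))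
        = fun s' => ((a (t, s')) ^ 2 + α ^ 2 * (bb (t, s')) ^ 2) / 2
          - 2 / bb (t, s') + b (φ t s') :=
      funext fun s' => by rw [hpt, hps]
    show deriv _ s = _
    rw [hfun]
    exact (((((h_as.pow 2).add ((h_bs.pow 2).const_mul (α ^ 2))).div_const 2).sub
      ((hasDerivAt_const s (2 : ℝ)).div h_bs hBne)).add (hb'.comp s h_phis)).deriv
  rw [g1, g2, ← hsymm]
  field_simp at pde ⊢
  have h0 : bb (t, s) * (bb (t, s) ^ 3 * (H (1, 0) (1, 0))
      - bb (t, s) ^ 3 * α ^ 2 * (H (0, 1) (0, 1)) - 2 * (H (0, 1) (0, 1))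
      - bb (t, s) ^ 3 * deriv b (φ t s)) = 0 := by linear_combination bb (t, s) * pde
  have pde' := (mul_eq_zero.mp h0).resolve_left hBne
  linear_combination pde'
end

section
/- Let α ∈ ℝ, let b : ℝ → ℝ be continuously differentiable, and let φ : ℝ² → ℝ, φ = φ(t,s), be twice continuously differentiable with φ_s(t,s) > 0 for all (t,s), satisfying the one-dimensional SMHD equation in Lagrangian coordinates φ_tt − α² φ_ss + ∂_s(1/φ_s²) − b′(φ) = 0. Then the local conservation law of energy holds identically: ∂_t( (φ_t² + α² φ_s²)/2 + 1/φ_s − b(φ) ) + ∂_s( φ_t/φ_s² − α² φ_t φ_s ) = 0 for all (t,s). -/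
lemma sliceT' {G : ℝ × ℝ → ℝ} {t s : ℝ} (hG : DifferentiableAt ℝ G (t, s)) :
    HasDerivAt (fun t' => G (t', s)) (fderiv ℝ G (t, s) (1, 0)) t := by
  have h := hG.hasFDerivAt.comp_hasDerivAt t
    ((hasDerivAt_id t).prodMk (hasDerivAt_const t s))
  simpa [Function.comp_def] using h

lemma sliceS' {G : ℝ × ℝ → ℝ} {t s : ℝ} (hG : DifferentiableAt ℝ G (t, s)) :
    HasDerivAt (fun s' => G (t, s')) (fderiv ℝ G (t, s) (0, 1)) s := by
  have h := hG.hasFDerivAt.comp_hasDerivAt s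
    ((hasDerivAt_const s t).prodMk (hasDerivAt_id s))
  simpa [Function.comp_def] using h

/-- energy conservation law for the 1D SMHD equation in
Lagrangian coordinates with arbitrary bottom topography. -/
theorem smhd_energy_conservation
    (α : ℝ) (b : ℝ → ℝ) (hb : ContDiff ℝ 1 b)
    (φ : ℝ → ℝ → ℝ)
    (hφ : ContDiff ℝ 2 (fun p : ℝ × ℝ => φ p.1 p.2))
    (hpos : ∀ t s, 0 < ps φ t s)
    (hpde : ∀ t s,
      pt (pt φ) t s - α ^ 2 * ps (ps φ) t s
        + ps (fun t s => 1 / (ps φ t s) ^ 2) t s - deriv b (φ t s) = 0) :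
    ∀ t s,
      pt (fun t s =>
          ((pt φ t s) ^ 2 + α ^ 2 * (ps φ t s) ^ 2) / 2
            + 1 / ps φ t s - b (φ t s)) t s
        + ps (fun t s =>
            pt φ t s / (ps φ t s) ^ 2 - α ^ 2 * pt φ t s * ps φ t s) t s = 0 := by
  intro t s
  set F : ℝ × ℝ → ℝ := fun p => φ p.1 p.2 with hF
  have hFd : Differentiable ℝ F := hφ.differentiable two_ne_zero
  have hF' : ContDiff ℝ 1 (fderiv ℝ F) := hφ.fderiv_right (le_refl _)
  set G1 : ℝ × ℝ → ℝ := fun p => fderiv ℝ F p (1, 0) with hG1def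
  set G2 : ℝ × ℝ → ℝ := fun p => fderiv ℝ F p (0, 1) with hG2def
  have hG1 : Differentiable ℝ G1 :=
    (hF'.clm_apply contDiff_const).differentiable one_ne_zero
  have hG2 : Differentiable ℝ G2 :=
    (hF'.clm_apply contDiff_const).differentiable one_ne_zero
  -- first partials as slices of G1, G2
  have e1 : ∀ t' s', pt φ t' s' = G1 (t', s') := by
    intro t' s'
    exact (sliceT' (hFd (t', s'))).deriv
  have e2 : ∀ t' s', ps φ t' s' = G2 (t', s') := by
    intro t' s'
    exact (sliceS' (hFd (t', s'))).deriv
  -- second partials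
  set A11 := fderiv ℝ G1 (t, s) (1, 0) with hA11
  set A12 := fderiv ℝ G1 (t, s) (0, 1) with hA12
  set A21 := fderiv ℝ G2 (t, s) (1, 0) with hA21
  set A22 := fderiv ℝ G2 (t, s) (0, 1) with hA22
  have h1 : HasDerivAt (fun t' => φ t' s) (G1 (t, s)) t := sliceT' (hFd (t, s))
  have h2 : HasDerivAt (fun t' => G1 (t', s)) A11 t := sliceT' (hG1 (t, s))
  have h3 : HasDerivAt (fun t' => G2 (t', s)) A21 t := sliceT' (hG2 (t, s))
  have h4 : HasDerivAt (fun s' => G1 (t, s')) A12 s := sliceS' (hG1 (t, s))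
  have h5 : HasDerivAt (fun s' => G2 (t, s')) A22 s := sliceS' (hG2 (t, s))
  -- symmetry of second derivatives : A21 = A12
  have hd2 : DifferentiableAt ℝ (fderiv ℝ F) (t, s) := (hF'.differentiable one_ne_zero) (t, s)
  have eflip1 : fderiv ℝ G1 (t, s) = (fderiv ℝ (fderiv ℝ F) (t, s)).flip ((1:ℝ), (0:ℝ)) := by
    rw [hG1def, fderiv_clm_apply hd2 (differentiableAt_const _)]
    simp
  have eflip2 : fderiv ℝ G2 (t, s) = (fderiv ℝ (fderiv ℝ F) (t, s)).flip ((0:ℝ), (1:ℝ)) := by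
    rw [hG2def, fderiv_clm_apply hd2 (differentiableAt_const _)]
    simp
  have hsym : A21 = A12 := by
    rw [hA21, hA12, eflip1, eflip2]
    exact (hφ.contDiffAt (x := (t, s))).isSymmSndFDerivAt (by simp) (1, 0) (0, 1)
  -- notation for the point values
  set U := G1 (t, s) with hU
  set V := G2 (t, s) with hV
  have hVpos : 0 < V := by rw [hV, ← e2]; exact hpos t s
  have hVne : V ≠ 0 := ne_of_gt hVpos
  set B := deriv b (φ t s) with hB
  have hbφ : HasDerivAt (fun t' => b (φ t' s)) (B * U) t :=
    ((hb.differentiable one_ne_zero (φ t s)).hasDerivAt).comp t h1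
  -- rewrite the PDE
  have hPslice : HasDerivAt (fun s' => 1 / (G2 (t, s')) ^ 2)
      (-(2 * V ^ 1 * A22) / (V ^ 2) ^ 2) s := by
    have := (h5.fun_pow 2).fun_inv (by positivity)
    simp only [one_div]
    refine this.congr_deriv ?_
    rw [← hV]
    norm_num
  have cP : ps (fun t s => 1 / (ps φ t s) ^ 2) t s = -(2 * V ^ 1 * A22) / (V ^ 2) ^ 2 := by
    have : (fun s' => 1 / (ps φ t s') ^ 2) = fun s' => 1 / (G2 (t, s')) ^ 2 := by
      funext s'; rw [e2]
    rw [ps, this]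
    exact hPslice.deriv
  have cU : pt (pt φ) t s = A11 := by
    have : (fun t' => pt φ t' s) = fun t' => G1 (t', s) := by funext t'; rw [e1]
    rw [pt, this]; exact h2.deriv
  have cV : ps (ps φ) t s = A22 := by
    have : (fun s' => ps φ t s') = fun s' => G2 (t, s') := by funext s'; rw [e2]
    rw [ps, this]; exact h5.deriv
  have hpde' : A11 - α ^ 2 * A22 + -(2 * V ^ 1 * A22) / (V ^ 2) ^ 2 - B = 0 := by
    have := hpde t s
    rwa [cU, cV, cP, ← hB] at this
  -- compute the time derivative of the energy density
  have hE : HasDerivAt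
      (fun t' => ((pt φ t' s) ^ 2 + α ^ 2 * (ps φ t' s) ^ 2) / 2
          + 1 / ps φ t' s - b (φ t' s))
      (U * A11 + α ^ 2 * V * A12 - A12 / V ^ 2 - B * U) t := by
    have key : (fun t' => ((pt φ t' s) ^ 2 + α ^ 2 * (ps φ t' s) ^ 2) / 2
          + 1 / ps φ t' s - b (φ t' s))
        = fun t' => ((G1 (t', s)) ^ 2 + α ^ 2 * (G2 (t', s)) ^ 2) / 2
          + (G2 (t', s))⁻¹ - b (φ t' s) := by
      funext t'; rw [e1, e2, one_div]
    rw [key]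
    have hcore := (((h2.fun_pow 2).fun_add ((h3.fun_pow 2).const_mul (α ^ 2))).div_const 2).fun_add
      (h3.fun_inv hVne) |>.fun_sub hbφ
    refine hcore.congr_deriv ?_
    rw [hsym, ← hU, ← hV]
    field_simp
    ring
  -- compute the space derivative of the flux
  have hFl : HasDerivAt
      (fun s' => pt φ t s' / (ps φ t s') ^ 2 - α ^ 2 * pt φ t s' * ps φ t s')
      (A12 / V ^ 2 - 2 * U * A22 / V ^ 3 - α ^ 2 * (A12 * V + U * A22)) s := by
    have key : (fun s' => pt φ t s' / (ps φ t s') ^ 2 - α ^ 2 * pt φ t s' * ps φ t s')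
        = fun s' => G1 (t, s') / (G2 (t, s')) ^ 2 - α ^ 2 * G1 (t, s') * G2 (t, s') := by
      funext s'; rw [e1, e2]
    rw [key]
    have hcore := (h4.fun_div (h5.fun_pow 2) (by positivity)).fun_sub
      (((h4.const_mul (α ^ 2)).fun_mul h5))
    refine hcore.congr_deriv ?_
    rw [← hU, ← hV]
    field_simp
    ring
  -- put everything together
  rw [pt, ps, hE.deriv, hFl.deriv]
  have expand : A11 = α ^ 2 * A22 + 2 * A22 / V ^ 3 + B := by
    have hq : -(2 * V ^ 1 * A22) / (V ^ 2) ^ 2 = -(2 * A22 / V ^ 3) := by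
      field_simp
    rw [hq] at hpde'
    linarith
  rw [expand]
  field_simp
  ring
end

section
/- Let α ∈ ℝ and let φ : ℝ² → ℝ, φ = φ(t,s), be twice continuously differentiable with φ_s(t,s) > 0 for all (t,s), satisfying the one-dimensional SMHD equation in Lagrangian coordinates with parabolic bottom concave up (b′(φ) = φ): φ_tt − α² φ_ss + ∂_s(1/φ_s²) − φ = 0. Then the additional conservation law holds identically: ∂_t( (φ − φ_t − φ_s) e^t ) + ∂_s( (α² φ_s + φ_t + φ − 1/φ_s²) e^t ) = 0 for all (t,s). -/
set_option maxHeartbeats 1000000 in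
/-- first additional conservation law for the parabolic bottom
concave up (b'(φ) = φ). -/
theorem smhd_parabolic_up_cl1
    (α : ℝ) (φ : ℝ → ℝ → ℝ)
    (hφ : ContDiff ℝ 2 (fun p : ℝ × ℝ => φ p.1 p.2))
    (hpos : ∀ t s, 0 < ps φ t s)
    (hpde : ∀ t s,
      pt (pt φ) t s - α ^ 2 * ps (ps φ) t s
        + ps (fun t s => 1 / (ps φ t s) ^ 2) t s - φ t s = 0) :
    ∀ t s,
      pt (fun t s => (φ t s - pt φ t s - ps φ t s) * Real.exp t) t s
        + ps (fun t s =>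
            (α ^ 2 * ps φ t s + pt φ t s + φ t s - 1 / (ps φ t s) ^ 2)
              * Real.exp t) t s = 0 := by
  intro t s
  set F : ℝ × ℝ → ℝ := fun p => φ p.1 p.2 with hF
  have hFd : Differentiable ℝ F := hφ.differentiable two_ne_zero
  set G : ℝ × ℝ → (ℝ × ℝ →L[ℝ] ℝ) := fderiv ℝ F with hG
  have hGc : ContDiff ℝ 1 G := hφ.fderiv_right (le_refl 2)
  have hGd : Differentiable ℝ G := hGc.differentiable one_ne_zero
  -- curve derivatives
  have hcurve1 : ∀ t' s', HasDerivAt (fun u => (u, s') : ℝ → ℝ × ℝ) (1, 0) t' :=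
    fun t' s' => (hasDerivAt_id t').prodMk (hasDerivAt_const t' s')
  have hcurve2 : ∀ t' s', HasDerivAt (fun u => (t', u) : ℝ → ℝ × ℝ) (0, 1) s' :=
    fun t' s' => (hasDerivAt_const s' t').prodMk (hasDerivAt_id s')
  -- first partials as fderiv applications
  have hpt : ∀ t' s', HasDerivAt (fun u => φ u s') (G (t', s') (1, 0)) t' := by
    intro t' s'
    exact (hFd (t', s')).hasFDerivAt.comp_hasDerivAt t' (hcurve1 t' s')
  have hps : ∀ t' s', HasDerivAt (fun u => φ t' u) (G (t', s') (0, 1)) s' := by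
    intro t' s'
    exact (hFd (t', s')).hasFDerivAt.comp_hasDerivAt s' (hcurve2 t' s')
  have ept : ∀ t' s', pt φ t' s' = G (t', s') (1, 0) := fun t' s' => (hpt t' s').deriv
  have eps : ∀ t' s', ps φ t' s' = G (t', s') (0, 1) := fun t' s' => (hps t' s').deriv
  -- G along curves
  have hGt : ∀ v : ℝ × ℝ, HasDerivAt (fun u => G (u, s) v) (fderiv ℝ G (t, s) (1, 0) v) t := by
    intro v
    have h1 : HasDerivAt (fun u => G (u, s)) (fderiv ℝ G (t, s) (1, 0)) t :=
      (hGd (t, s)).hasFDerivAt.comp_hasDerivAt t (hcurve1 t s)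
    simpa using h1.clm_apply (hasDerivAt_const t v)
  have hGs : ∀ v : ℝ × ℝ, HasDerivAt (fun u => G (t, u) v) (fderiv ℝ G (t, s) (0, 1) v) s := by
    intro v
    have h1 : HasDerivAt (fun u => G (t, u)) (fderiv ℝ G (t, s) (0, 1)) s :=
      (hGd (t, s)).hasFDerivAt.comp_hasDerivAt s (hcurve2 t s)
    simpa using h1.clm_apply (hasDerivAt_const s v)
  -- second partials
  have h2 : HasDerivAt (fun u => pt φ u s) (fderiv ℝ G (t, s) (1, 0) (1, 0)) t := by
    have := hGt (1, 0); apply this.congr_of_eventuallyEq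
    filter_upwards with u; rw [ept]
  have h3 : HasDerivAt (fun u => ps φ u s) (fderiv ℝ G (t, s) (1, 0) (0, 1)) t := by
    have := hGt (0, 1); apply this.congr_of_eventuallyEq
    filter_upwards with u; rw [eps]
  have h5 : HasDerivAt (fun u => pt φ t u) (fderiv ℝ G (t, s) (0, 1) (1, 0)) s := by
    have := hGs (1, 0); apply this.congr_of_eventuallyEq
    filter_upwards with u; rw [ept]
  have h6 : HasDerivAt (fun u => ps φ t u) (fderiv ℝ G (t, s) (0, 1) (0, 1)) s := by
    have := hGs (0, 1); apply this.congr_of_eventuallyEq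
    filter_upwards with u; rw [eps]
  -- symmetry of second derivative
  have hsym : fderiv ℝ G (t, s) (1, 0) (0, 1) = fderiv ℝ G (t, s) (0, 1) (1, 0) :=
    second_derivative_symmetric (fun y => (hFd y).hasFDerivAt)
      ((hGd (t, s)).hasFDerivAt) _ _
  -- derivative of 1/(ps φ)^2 in s
  have hinv : HasDerivAt (fun u => 1 / (ps φ t u) ^ 2)
      (ps (fun t s => 1 / (ps φ t s) ^ 2) t s) s := by
    have hd : DifferentiableAt ℝ (fun u => 1 / (ps φ t u) ^ 2) s := by
      have : DifferentiableAt ℝ (fun u => ps φ t u) s := h6.differentiableAt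
      have h' : DifferentiableAt ℝ (fun u => ((ps φ t u) ^ 2)⁻¹) s :=
        (this.pow 2).inv (pow_ne_zero 2 (hpos t s).ne')
      simpa [one_div] using h'
    simpa [ps] using hd.hasDerivAt
  -- compute the t-derivative term
  have ht : pt (fun t s => (φ t s - pt φ t s - ps φ t s) * Real.exp t) t s
      = (pt φ t s - fderiv ℝ G (t, s) (1, 0) (1, 0) - fderiv ℝ G (t, s) (1, 0) (0, 1))
          * Real.exp t
        + (φ t s - pt φ t s - ps φ t s) * Real.exp t := by
    have h1 : HasDerivAt (fun u => φ u s) (pt φ t s) t := by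
      rw [ept]; exact hpt t s
    have := (((h1.sub h2).sub h3).mul (Real.hasDerivAt_exp t)).deriv
    simpa [pt, Pi.mul_def, Pi.sub_def] using this
  -- compute the s-derivative term
  have hs : ps (fun t s =>
        (α ^ 2 * ps φ t s + pt φ t s + φ t s - 1 / (ps φ t s) ^ 2) * Real.exp t) t s
      = (α ^ 2 * fderiv ℝ G (t, s) (0, 1) (0, 1) + fderiv ℝ G (t, s) (0, 1) (1, 0)
          + ps φ t s - ps (fun t s => 1 / (ps φ t s) ^ 2) t s) * Real.exp t := by
    have h4 : HasDerivAt (fun u => φ t u) (ps φ t s) s := by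
      rw [eps]; exact hps t s
    have := ((((h6.const_mul (α ^ 2)).add h5).add h4).sub hinv).mul_const (Real.exp t) |>.deriv
    simpa [ps] using this
  rw [ht, hs]
  have hp := hpde t s
  have e2 : pt (pt φ) t s = fderiv ℝ G (t, s) (1, 0) (1, 0) := h2.deriv
  have e6 : ps (ps φ) t s = fderiv ℝ G (t, s) (0, 1) (0, 1) := h6.deriv
  rw [e2, e6] at hp
  linear_combination (-Real.exp t) * hp + (-Real.exp t) * hsym
end

section
/- Let α ∈ ℝ and let φ : ℝ² → ℝ, φ = φ(t,s), be twice continuously differentiable with φ_s(t,s) > 0 for all (t,s), satisfying the one-dimensional SMHD equation in Lagrangian coordinates with parabolic bottom concave up (b′(φ) = φ): φ_tt − α² φ_ss + ∂_s(1/φ_s²) − φ = 0. Then the additional conservation law holds identically: ∂_t( (φ_t + φ_s + φ) e^{−t} ) + ∂_s( (φ − α² φ_s − φ_t + 1/φ_s²) e^{−t} ) = 0 for all (t,s). -/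
/-- second additional conservation law for the parabolic bottom
concave up (b'(φ) = φ). -/
theorem smhd_parabolic_up_cl2
    (α : ℝ) (φ : ℝ → ℝ → ℝ)
    (hφ : ContDiff ℝ 2 (fun p : ℝ × ℝ => φ p.1 p.2))
    (hpos : ∀ t s, 0 < ps φ t s)
    (hpde : ∀ t s,
      pt (pt φ) t s - α ^ 2 * ps (ps φ) t s
        + ps (fun t s => 1 / (ps φ t s) ^ 2) t s - φ t s = 0) :
    ∀ t s,
      pt (fun t s => (pt φ t s + ps φ t s + φ t s) * Real.exp (-t)) t s
        + ps (fun t s =>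
            (φ t s - α ^ 2 * ps φ t s - pt φ t s + 1 / (ps φ t s) ^ 2)
              * Real.exp (-t)) t s = 0 := by
  set F : ℝ × ℝ → ℝ := fun p => φ p.1 p.2 with hFdef
  have hF1 : Differentiable ℝ F := hφ.differentiable (by norm_num)
  have hf'C : ContDiff ℝ 1 (fderiv ℝ F) := hφ.fderiv_right (by norm_num)
  have hf'd : Differentiable ℝ (fderiv ℝ F) := hf'C.differentiable (by norm_num)
  -- first partials
  have hpt : ∀ t s : ℝ, HasDerivAt (fun t' => φ t' s)
      (fderiv ℝ F (t, s) (1, 0)) t := by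
    intro t s
    have h1 : HasDerivAt (fun t' : ℝ => ((t' : ℝ), s)) ((1 : ℝ), (0 : ℝ)) t :=
      (hasDerivAt_id t).prodMk (hasDerivAt_const t s)
    exact (hF1 (t, s)).hasFDerivAt.comp_hasDerivAt t h1
  have hps : ∀ t s : ℝ, HasDerivAt (fun s' => φ t s')
      (fderiv ℝ F (t, s) (0, 1)) s := by
    intro t s
    have h1 : HasDerivAt (fun s' : ℝ => ((t : ℝ), (s' : ℝ))) ((0 : ℝ), (1 : ℝ)) s :=
      (hasDerivAt_const s t).prodMk (hasDerivAt_id s)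
    exact (hF1 (t, s)).hasFDerivAt.comp_hasDerivAt s h1
  have hpt_eq : ∀ t s : ℝ, pt φ t s = fderiv ℝ F (t, s) (1, 0) :=
    fun t s => (hpt t s).deriv
  have hps_eq : ∀ t s : ℝ, ps φ t s = fderiv ℝ F (t, s) (0, 1) :=
    fun t s => (hps t s).deriv
  -- derivative of (p ↦ fderiv F p v)
  have happ : ∀ (p : ℝ × ℝ) (v : ℝ × ℝ), HasFDerivAt (fun q => fderiv ℝ F q v)
      ((fderiv ℝ (fderiv ℝ F) p).flip v) p := by
    intro p v
    have h := (hf'd p).hasFDerivAt.clm_apply (hasFDerivAt_const v p)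
    simpa using h
  -- mixed second partials along time direction
  have hmixT : ∀ (t s : ℝ) (v : ℝ × ℝ),
      HasDerivAt (fun t' => fderiv ℝ F (t', s) v)
        (fderiv ℝ (fderiv ℝ F) (t, s) (1, 0) v) t := by
    intro t s v
    have h1 : HasDerivAt (fun t' : ℝ => ((t' : ℝ), s)) ((1 : ℝ), (0 : ℝ)) t :=
      (hasDerivAt_id t).prodMk (hasDerivAt_const t s)
    have h2 := ((happ (t, s) v).comp_hasDerivAt t h1)
    simpa [Function.comp_def] using h2
  have hmixS : ∀ (t s : ℝ) (v : ℝ × ℝ),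
      HasDerivAt (fun s' => fderiv ℝ F (t, s') v)
        (fderiv ℝ (fderiv ℝ F) (t, s) (0, 1) v) s := by
    intro t s v
    have h1 : HasDerivAt (fun s' : ℝ => ((t : ℝ), (s' : ℝ))) ((0 : ℝ), (1 : ℝ)) s :=
      (hasDerivAt_const s t).prodMk (hasDerivAt_id s)
    have h2 := ((happ (t, s) v).comp_hasDerivAt s h1)
    simpa [Function.comp_def] using h2
  have hsymm : ∀ (p v w : ℝ × ℝ),
      fderiv ℝ (fderiv ℝ F) p v w = fderiv ℝ (fderiv ℝ F) p w v := by
    intro p v w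
    exact second_derivative_symmetric (fun y => (hF1 y).hasFDerivAt)
      (hf'd p).hasFDerivAt v w
  intro t s
  set E : ℝ := Real.exp (-t) with hE
  -- abbreviations for second derivative values
  set A := fderiv ℝ (fderiv ℝ F) (t, s) (1, 0) (1, 0) with hA
  set C := fderiv ℝ (fderiv ℝ F) (t, s) (1, 0) (0, 1) with hC
  set M := fderiv ℝ (fderiv ℝ F) (t, s) (0, 1) (1, 0) with hM
  set B := fderiv ℝ (fderiv ℝ F) (t, s) (0, 1) (0, 1) with hB
  -- derivatives of the partials
  have hTT : HasDerivAt (fun t' => pt φ t' s) A t := by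
    have h := hmixT t s (1, 0)
    have heq : (fun t' => pt φ t' s) = fun t' => fderiv ℝ F (t', s) (1, 0) :=
      funext fun t' => hpt_eq t' s
    rw [heq]; exact h
  have hTS : HasDerivAt (fun t' => ps φ t' s) C t := by
    have h := hmixT t s (0, 1)
    have heq : (fun t' => ps φ t' s) = fun t' => fderiv ℝ F (t', s) (0, 1) :=
      funext fun t' => hps_eq t' s
    rw [heq]; exact h
  have hST : HasDerivAt (fun s' => pt φ t s') M s := by
    have h := hmixS t s (1, 0)
    have heq : (fun s' => pt φ t s') = fun s' => fderiv ℝ F (t, s') (1, 0) :=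
      funext fun s' => hpt_eq t s'
    rw [heq]; exact h
  have hSS : HasDerivAt (fun s' => ps φ t s') B s := by
    have h := hmixS t s (0, 1)
    have heq : (fun s' => ps φ t s') = fun s' => fderiv ℝ F (t, s') (0, 1) :=
      funext fun s' => hps_eq t s'
    rw [heq]; exact h
  -- derivative of the 1/φ_s² term (kept abstract)
  have hGdiff : DifferentiableAt ℝ (fun s' => 1 / (ps φ t s') ^ 2) s := by
    have hd : DifferentiableAt ℝ (fun s' => ps φ t s') s := hSS.differentiableAt
    have hne : (ps φ t s) ^ 2 ≠ 0 := pow_ne_zero 2 (hpos t s).ne'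
    simpa [one_div] using (hd.fun_pow 2).fun_inv hne
  set R : ℝ := deriv (fun s' => 1 / (ps φ t s') ^ 2) s with hR
  have hSR : HasDerivAt (fun s' => 1 / (ps φ t s') ^ 2) R s := hGdiff.hasDerivAt
  -- the PDE in these variables
  have hpde' : A - α ^ 2 * B + R - φ t s = 0 := by
    have h := hpde t s
    have e1 : pt (pt φ) t s = A := hTT.deriv
    have e2 : ps (ps φ) t s = B := hSS.deriv
    have e3 : ps (fun t s => 1 / (ps φ t s) ^ 2) t s = R := rfl
    rw [e1, e2, e3] at h
    exact h
  have hCM : C = M := hsymm (t, s) (1, 0) (0, 1)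
  -- exponential factor
  have hexp : HasDerivAt (fun t' : ℝ => Real.exp (-t')) (Real.exp (-t) * (-1)) t :=
    ((hasDerivAt_id t).neg).exp
  -- total time derivative
  have hT : HasDerivAt (fun t' => (pt φ t' s + ps φ t' s + φ t' s) * Real.exp (-t'))
      ((A + C + fderiv ℝ F (t, s) (1, 0)) * Real.exp (-t)
        + (pt φ t s + ps φ t s + φ t s) * (Real.exp (-t) * (-1))) t := by
    exact ((hTT.add hTS).add (hpt t s)).mul hexp
  -- total space derivative
  have hS : HasDerivAt (fun s' =>
      (φ t s' - α ^ 2 * ps φ t s' - pt φ t s' + 1 / (ps φ t s') ^ 2) * Real.exp (-t))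
      ((fderiv ℝ F (t, s) (0, 1) - α ^ 2 * B - M + R) * Real.exp (-t)) s := by
    exact (((hps t s).sub (hSS.const_mul (α ^ 2))).sub hST).add hSR |>.mul_const _
  show deriv (fun t' => (pt φ t' s + ps φ t' s + φ t' s) * Real.exp (-t')) t
      + deriv (fun s' =>
          (φ t s' - α ^ 2 * ps φ t s' - pt φ t s' + 1 / (ps φ t s') ^ 2)
            * Real.exp (-t)) s = 0
  rw [hT.deriv, hS.deriv]
  have hp : fderiv ℝ F (t, s) (1, 0) = pt φ t s := (hpt_eq t s).symm
  have hq : fderiv ℝ F (t, s) (0, 1) = ps φ t s := (hps_eq t s).symm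
  rw [hp, hq, hCM]
  linear_combination Real.exp (-t) * hpde'
end

section
/- Let α ∈ ℝ and let φ : ℝ² → ℝ, φ = φ(t,s), be twice continuously differentiable with φ_s(t,s) > 0 for all (t,s), satisfying the one-dimensional SMHD equation in Lagrangian coordinates with parabolic bottom concave down (b′(φ) = −φ): φ_tt − α² φ_ss + ∂_s(1/φ_s²) + φ = 0. Then the additional conservation law holds identically: ∂_t( φ sin t + φ_t cos t ) − ∂_s( (α² φ_s − 1/φ_s²) cos t ) = 0 for all (t,s). -/
/-- first additional conservation law for the parabolic bottom
concave down (b'(φ) = -φ). -/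
theorem smhd_parabolic_down_cl1
    (α : ℝ) (φ : ℝ → ℝ → ℝ)
    (hφ : ContDiff ℝ 2 (fun p : ℝ × ℝ => φ p.1 p.2))
    (hpos : ∀ t s, 0 < ps φ t s)
    (hpde : ∀ t s,
      pt (pt φ) t s - α ^ 2 * ps (ps φ) t s
        + ps (fun t s => 1 / (ps φ t s) ^ 2) t s + φ t s = 0) :
    ∀ t s,
      pt (fun t s => φ t s * Real.sin t + pt φ t s * Real.cos t) t s
        - ps (fun t s =>
            (α ^ 2 * ps φ t s - 1 / (ps φ t s) ^ 2) * Real.cos t) t s = 0 := by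
  intro t s
  have hts : ContDiff ℝ 2 (fun t' => φ t' s) :=
    hφ.comp (contDiff_id.prodMk contDiff_const)
  have hss : ContDiff ℝ 2 (fun s' => φ t s') :=
    hφ.comp (contDiff_const.prodMk contDiff_id)
  have hd1 : Differentiable ℝ (fun t' => φ t' s) := hts.differentiable (by norm_num)
  have hd2 : Differentiable ℝ (fun t' => pt φ t' s) := by
    have h2 : ContDiff ℝ (1+1) (fun t' => φ t' s) := by norm_num [hts]
    exact (contDiff_succ_iff_deriv.mp h2).2.2.differentiable one_ne_zero
  have hd3 : Differentiable ℝ (fun s' => ps φ t s') := by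
    have h2 : ContDiff ℝ (1+1) (fun s' => φ t s') := by norm_num [hss]
    exact (contDiff_succ_iff_deriv.mp h2).2.2.differentiable one_ne_zero
  have hd4 : ∀ x, DifferentiableAt ℝ (fun s' => 1 / (ps φ t s') ^ 2) x := by
    intro x
    exact (differentiableAt_const 1).div ((hd3 x).pow 2)
      (pow_ne_zero _ (ne_of_gt (hpos t x)))
  -- time derivative
  have HA : HasDerivAt (fun t' => φ t' s) (pt φ t s) t := (hd1 t).hasDerivAt
  have HB : HasDerivAt (fun t' => pt φ t' s) (pt (pt φ) t s) t := (hd2 t).hasDerivAt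
  have Htot := (HA.mul (Real.hasDerivAt_sin t)).add (HB.mul (Real.hasDerivAt_cos t))
  have e1 : pt (fun t s => φ t s * Real.sin t + pt φ t s * Real.cos t) t s
      = pt φ t s * Real.sin t + φ t s * Real.cos t
        + (pt (pt φ) t s * Real.cos t + pt φ t s * -Real.sin t) := Htot.deriv
  -- space derivative
  have HC : HasDerivAt (fun s' => ps φ t s') (ps (ps φ) t s) s := (hd3 s).hasDerivAt
  have HD : HasDerivAt (fun s' => 1 / (ps φ t s') ^ 2)
      (ps (fun t s => 1 / (ps φ t s) ^ 2) t s) s := (hd4 s).hasDerivAt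
  have Hflux := ((HC.const_mul (α ^ 2)).sub HD).mul_const (Real.cos t)
  have e2 : ps (fun t s => (α ^ 2 * ps φ t s - 1 / (ps φ t s) ^ 2) * Real.cos t) t s
      = (α ^ 2 * ps (ps φ) t s - ps (fun t s => 1 / (ps φ t s) ^ 2) t s)
        * Real.cos t := Hflux.deriv
  rw [e1, e2]
  linear_combination (Real.cos t) * hpde t s
end

section
/- Let α ∈ ℝ and let φ : ℝ² → ℝ, φ = φ(t,s), be twice continuously differentiable with φ_s(t,s) > 0 for all (t,s), satisfying the one-dimensional SMHD equation in Lagrangian coordinates with parabolic bottom concave down (b′(φ) = −φ): φ_tt − α² φ_ss + ∂_s(1/φ_s²) + φ = 0. Then the additional conservation law holds identically: ∂_t( φ cos t − φ_t sin t ) + ∂_s( (α² φ_s − 1/φ_s²) sin t ) = 0 for all (t,s). -/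
/-- second additional conservation law for the parabolic bottom
concave down (b'(φ) = -φ). -/
theorem smhd_parabolic_down_cl2
    (α : ℝ) (φ : ℝ → ℝ → ℝ)
    (hφ : ContDiff ℝ 2 (fun p : ℝ × ℝ => φ p.1 p.2))
    (hpos : ∀ t s, 0 < ps φ t s)
    (hpde : ∀ t s,
      pt (pt φ) t s - α ^ 2 * ps (ps φ) t s
        + ps (fun t s => 1 / (ps φ t s) ^ 2) t s + φ t s = 0) :
    ∀ t s,
      pt (fun t s => φ t s * Real.cos t - pt φ t s * Real.sin t) t s
        + ps (fun t s =>
            (α ^ 2 * ps φ t s - 1 / (ps φ t s) ^ 2) * Real.sin t) t s = 0 := by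
  intro t s
  -- time slice
  have hf : ContDiff ℝ 2 (fun t' => φ t' s) :=
    hφ.comp (contDiff_id.prodMk contDiff_const)
  have hg : ContDiff ℝ 2 (fun s' => φ t s') :=
    hφ.comp (contDiff_const.prodMk contDiff_id)
  have hf' := (contDiff_succ_iff_deriv.mp (show ContDiff ℝ (1+1) (fun t' => φ t' s) from hf))
  have hg' := (contDiff_succ_iff_deriv.mp (show ContDiff ℝ (1+1) (fun s' => φ t s') from hg))
  have hfd : Differentiable ℝ (fun t' => φ t' s) := hf'.1
  have hfdd : Differentiable ℝ (deriv (fun t' => φ t' s)) :=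
    hf'.2.2.differentiable one_ne_zero
  have hgd : Differentiable ℝ (fun s' => φ t s') := hg'.1
  have hgdd : Differentiable ℝ (deriv (fun s' => φ t s')) :=
    hg'.2.2.differentiable one_ne_zero
  have hne : (deriv (fun s' => φ t s') s) ^ 2 ≠ 0 :=
    pow_ne_zero 2 (ne_of_gt (hpos t s))
  have hinv : DifferentiableAt ℝ (fun s' => 1 / (deriv (fun v => φ t v) s') ^ 2) s :=
    (differentiableAt_const 1).div ((hgdd s).pow 2) hne
  have H : HasDerivAt
      (fun t' => φ t' s * Real.cos t' - deriv (fun u => φ u s) t' * Real.sin t')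
      (deriv (fun u => φ u s) t * Real.cos t + φ t s * (-Real.sin t)
        - (deriv (deriv (fun u => φ u s)) t * Real.sin t
            + deriv (fun u => φ u s) t * Real.cos t)) t :=
    (((hfd t).hasDerivAt.mul (Real.hasDerivAt_cos t)).sub
      ((hfdd t).hasDerivAt.mul (Real.hasDerivAt_sin t)))
  have H2 : HasDerivAt
      (fun s' => (α ^ 2 * deriv (fun v => φ t v) s' - 1 / (deriv (fun v => φ t v) s') ^ 2) * Real.sin t)
      ((α ^ 2 * deriv (deriv (fun v => φ t v)) s
        - deriv (fun s' => 1 / (deriv (fun v => φ t v) s') ^ 2) s) * Real.sin t) s :=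
    ((((hgdd s).hasDerivAt.const_mul (α ^ 2)).sub hinv.hasDerivAt).mul_const _)
  have e1 : pt (fun t s => φ t s * Real.cos t - pt φ t s * Real.sin t) t s
      = deriv (fun u => φ u s) t * Real.cos t + φ t s * (-Real.sin t)
        - (deriv (deriv (fun u => φ u s)) t * Real.sin t
            + deriv (fun u => φ u s) t * Real.cos t) := H.deriv
  have e2 : ps (fun t s => (α ^ 2 * ps φ t s - 1 / (ps φ t s) ^ 2) * Real.sin t) t s
      = (α ^ 2 * deriv (deriv (fun v => φ t v)) s
        - deriv (fun s' => 1 / (deriv (fun v => φ t v) s') ^ 2) s) * Real.sin t := H2.deriv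
  have hpde' := hpde t s
  have r1 : pt (pt φ) t s = deriv (deriv (fun u => φ u s)) t := rfl
  have r2 : ps (ps φ) t s = deriv (deriv (fun v => φ t v)) s := rfl
  have r3 : ps (fun t s => 1 / (ps φ t s) ^ 2) t s
      = deriv (fun s' => 1 / (deriv (fun v => φ t v) s') ^ 2) s := rfl
  rw [r1, r2, r3] at hpde'
  rw [e1, e2]
  linear_combination (-Real.sin t) * hpde'
end

section
/- Let α ∈ ℝ, τ > 0, h > 0 and let x : ℤ × ℤ → ℝ be a grid function with x_s(n,i) ≠ 0 for all (n,i), satisfying the invariant scheme for the SMHD equations with horizontal bottom: x_tť(n,i) − α² x_sš(n,i) + [1/(x_s(n+1,i) x_s(n−1,i)) − 1/(x_s(n+1,i−1) x_s(n−1,i−1))]/h = 0 for all (n,i). Then the finite-difference center-of-mass law holds: for all (n,i), ([t_n x_t(n,i) − x(n,i)] − [t_{n−1} x_t(n−1,i) − x(n−1,i)])/τ + ( [t_n/(x_s(n+1,i) x_s(n−1,i)) − t_n α² x_s(n,i)] − [t_n/(x_s(n+1,i−1) x_s(n−1,i−1)) − t_n α² x_s(n,i−1)] )/h = 0, where t_n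 = n τ. -/
/-- Forward time difference on a uniform mesh with time step τ. -/
noncomputable def xt (τ : ℝ) (x : ℤ → ℤ → ℝ) (n i : ℤ) : ℝ := (x (n + 1) i - x n i) / τ

/-- Forward space difference on a uniform mesh with space step h. -/
noncomputable def xs (h : ℝ) (x : ℤ → ℤ → ℝ) (n i : ℤ) : ℝ := (x n (i + 1) - x n i) / h

/-- Second time difference. -/
noncomputable def xtt (τ : ℝ) (x : ℤ → ℤ → ℝ) (n i : ℤ) : ℝ :=
  (x (n + 1) i - 2 * x n i + x (n - 1) i) / τ ^ 2

/-- Second space difference. -/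
noncomputable def xss (h : ℝ) (x : ℤ → ℤ → ℝ) (n i : ℤ) : ℝ :=
  (x n (i + 1) - 2 * x n i + x n (i - 1)) / h ^ 2

/-- finite-difference center-of-mass law for the invariant SMHD
scheme with horizontal bottom. -/
theorem fd_smhd_center_of_mass
    (α τ h : ℝ) (hτ : 0 < τ) (hh : 0 < h)
    (x : ℤ → ℤ → ℝ) (hxs : ∀ n i, xs h x n i ≠ 0)
    (scheme : ∀ n i : ℤ,
      xtt τ x n i - α ^ 2 * xss h x n i
        + (1 / (xs h x (n + 1) i * xs h x (n - 1) i)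
            - 1 / (xs h x (n + 1) (i - 1) * xs h x (n - 1) (i - 1))) / h = 0) :
    ∀ n i : ℤ,
      (((n : ℝ) * τ * xt τ x n i - x n i)
          - (((n : ℝ) - 1) * τ * xt τ x (n - 1) i - x (n - 1) i)) / τ
        + (((n : ℝ) * τ / (xs h x (n + 1) i * xs h x (n - 1) i)
              - (n : ℝ) * τ * α ^ 2 * xs h x n i)
            - ((n : ℝ) * τ / (xs h x (n + 1) (i - 1) * xs h x (n - 1) (i - 1))
              - (n : ℝ) * τ * α ^ 2 * xs h x n (i - 1))) / h = 0 := by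
  intro n i
  have hs := scheme n i
  simp only [xt, xs, xtt, xss, sub_add_cancel] at hs ⊢
  have key : τ * τ⁻¹ = 1 := mul_inv_cancel₀ hτ.ne'
  linear_combination ((n : ℝ) * τ) * hs + (x n i - x (n - 1) i) * τ⁻¹ * key
end

section
/- Let α ∈ ℝ, τ > 0, h > 0 and let x : ℤ × ℤ → ℝ be a grid function with x_s(n,i) ≠ 0 for all (n,i), satisfying the invariant scheme for the SMHD equations with horizontal bottom: x_tť(n,i) − α² x_sš(n,i) + [1/(x_s(n+1,i) x_s(n−1,i)) − 1/(x_s(n+1,i−1) x_s(n−1,i−1))]/h = 0 for all (n,i). Define T(n,i) = (1/2)( x_t(n,i)² + 1/x_s(n,i) + 1/x_s(n+1,i) + α² x_s(n,i) x_s(n+1,i) ) and S(n,i) = (1/2)( x_t(n,i+1) + x_t(n−1,i+1) )( 1/(x_s(n+1,i) x_s(n−1,i)) − α² x_s(n,i) ). Then the finite-difference conservation law of energy holds: (T(n,i) − T(n−1,i))/τ + (S(n,i) − S(n,i−1))/h = 0 for all (n,i). -/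
/-- Conserved density of the finite-difference energy conservation law. -/
noncomputable def Ten (α τ h : ℝ) (x : ℤ → ℤ → ℝ) (n i : ℤ) : ℝ :=
  (1 / 2) * ((xt τ x n i) ^ 2 + 1 / xs h x n i + 1 / xs h x (n + 1) i
    + α ^ 2 * xs h x n i * xs h x (n + 1) i)

/-- Flux of the finite-difference energy conservation law. -/
noncomputable def Sen (α τ h : ℝ) (x : ℤ → ℤ → ℝ) (n i : ℤ) : ℝ :=
  (1 / 2) * (xt τ x n (i + 1) + xt τ x (n - 1) (i + 1))
    * (1 / (xs h x (n + 1) i * xs h x (n - 1) i) - α ^ 2 * xs h x n i)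

set_option maxHeartbeats 1000000 in
private lemma fd_aux (α τ h v w vp wp a b c a' b' c' : ℝ)
    (hτ : τ ≠ 0) (hh : h ≠ 0) (ha : a ≠ 0) (hb : b ≠ 0) (hc : c ≠ 0)
    (ha' : a' ≠ 0) (hc' : c' ≠ 0)
    (hac : a - c = (τ / h) * (vp + wp - v - w))
    (hE : (v - w) / τ - α ^ 2 * ((b - b') / h)
        + (1 / (a * c) - 1 / (a' * c')) / h = 0) :
    ((1 / 2) * (v ^ 2 + 1 / b + 1 / a + α ^ 2 * b * a)
      - (1 / 2) * (w ^ 2 + 1 / c + 1 / b + α ^ 2 * c * b)) / τ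
    + ((1 / 2) * (vp + wp) * (1 / (a * c) - α ^ 2 * b)
      - (1 / 2) * (v + w) * (1 / (a' * c') - α ^ 2 * b')) / h = 0 := by
  have h1 :
      ((1 / 2) * (v ^ 2 + 1 / b + 1 / a + α ^ 2 * b * a)
        - (1 / 2) * (w ^ 2 + 1 / c + 1 / b + α ^ 2 * c * b)) / τ
      + ((1 / 2) * (vp + wp) * (1 / (a * c) - α ^ 2 * b)
        - (1 / 2) * (v + w) * (1 / (a' * c') - α ^ 2 * b')) / h
      = ((v + w) / 2) * ((v - w) / τ - α ^ 2 * ((b - b') / h)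
            + (1 / (a * c) - 1 / (a' * c')) / h)
        + ((α ^ 2 * b - 1 / (a * c)) / (2 * τ))
            * (a - c - (τ / h) * (vp + wp - v - w)) := by
    field_simp
    ring
  rw [h1, hE, hac]
  ring

set_option maxHeartbeats 1000000 in
/-- finite-difference energy conservation law for the invariant
SMHD scheme with horizontal bottom. -/
theorem fd_smhd_energy
    (α τ h : ℝ) (hτ : 0 < τ) (hh : 0 < h)
    (x : ℤ → ℤ → ℝ) (hxs : ∀ n i, xs h x n i ≠ 0)
    (scheme : ∀ n i : ℤ,
      xtt τ x n i - α ^ 2 * xss h x n i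
        + (1 / (xs h x (n + 1) i * xs h x (n - 1) i)
            - 1 / (xs h x (n + 1) (i - 1) * xs h x (n - 1) (i - 1))) / h = 0) :
    ∀ n i : ℤ,
      (Ten α τ h x n i - Ten α τ h x (n - 1) i) / τ
        + (Sen α τ h x n i - Sen α τ h x n (i - 1)) / h = 0 := by
  intro n i
  have hτ' : τ ≠ 0 := ne_of_gt hτ
  have hh' : h ≠ 0 := ne_of_gt hh
  have e1 : n - 1 + 1 = n := by ring
  have e2 : i - 1 + 1 = i := by ring
  have hac : xs h x (n + 1) i - xs h x (n - 1) i
      = (τ / h) * (xt τ x n (i + 1) + xt τ x (n - 1) (i + 1)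
          - xt τ x n i - xt τ x (n - 1) i) := by
    simp only [xt, xs, e1]
    field_simp
    ring
  have hE : (xt τ x n i - xt τ x (n - 1) i) / τ
      - α ^ 2 * ((xs h x n i - xs h x n (i - 1)) / h)
      + (1 / (xs h x (n + 1) i * xs h x (n - 1) i)
          - 1 / (xs h x (n + 1) (i - 1) * xs h x (n - 1) (i - 1))) / h = 0 := by
    have hs := scheme n i
    have eq1 : (xt τ x n i - xt τ x (n - 1) i) / τ = xtt τ x n i := by
      simp only [xt, xtt, e1]
      field_simp
      ring
    have eq2 : (xs h x n i - xs h x n (i - 1)) / h = xss h x n i := by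
      simp only [xs, xss, e2]
      field_simp
      ring
    rw [eq1, eq2]
    exact hs
  simp only [Ten, Sen, e1, e2]
  exact fd_aux α τ h (xt τ x n i) (xt τ x (n - 1) i)
    (xt τ x n (i + 1)) (xt τ x (n - 1) (i + 1))
    (xs h x (n + 1) i) (xs h x n i) (xs h x (n - 1) i)
    (xs h x (n + 1) (i - 1)) (xs h x n (i - 1)) (xs h x (n - 1) (i - 1))
    hτ' hh' (hxs (n + 1) i) (hxs n i) (hxs (n - 1) i)
    (hxs (n + 1) (i - 1)) (hxs (n - 1) (i - 1)) hac hE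
end

section
/- Let α ∈ ℝ, τ > 0, h > 0 and let x : ℤ × ℤ → ℝ be a grid function with x_s(n,i) ≠ 0 for all (n,i), satisfying the invariant scheme for the SMHD equations with parabolic bottom concave up, i.e. with B̌(n,i) = (2(cosh τ − 1)/τ²) x(n,i): x_tť(n,i) − α² x_sš(n,i) + [1/(x_s(n+1,i) x_s(n−1,i)) − 1/(x_s(n+1,i−1) x_s(n−1,i−1))]/h − (2(cosh τ − 1)/τ²) x(n,i) = 0 for all (n,i). Define T(n,i) = x(n,i)(e^{t_{n+1}} − e^{t_n})/τ − e^{t_n} x_t(n,i), with t_n = nτ. Then the additional finite-difference conservation law holds: (T(n,i) − T(n−1,i))/τ − ( e^{t_n}[1/(x_s(n+1,i) x_s(n−1,i)) − α² x_s(n,i)] − e^{t_n}[1/(x_s(n+1,i−1) x_s(n−1,i−1)) − α² x_s(n,i−1)] )/h = 0 for all (n,i). -/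
/-- Conserved density of the first additional conservation law for the
parabolic bottom concave up. -/
noncomputable def Tpl (α τ h : ℝ) (x : ℤ → ℤ → ℝ) (n i : ℤ) : ℝ :=
  x n i * (Real.exp (((n : ℝ) + 1) * τ) - Real.exp ((n : ℝ) * τ)) / τ
    - Real.exp ((n : ℝ) * τ) * xt τ x n i

/-- first additional finite-difference conservation law for the
invariant SMHD scheme with parabolic bottom concave up. -/
theorem fd_smhd_parabolic_up_cl1
    (α τ h : ℝ) (hτ : 0 < τ) (hh : 0 < h)
    (x : ℤ → ℤ → ℝ) (hxs : ∀ n i, xs h x n i ≠ 0)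
    (scheme : ∀ n i : ℤ,
      xtt τ x n i - α ^ 2 * xss h x n i
        + (1 / (xs h x (n + 1) i * xs h x (n - 1) i)
            - 1 / (xs h x (n + 1) (i - 1) * xs h x (n - 1) (i - 1))) / h
        - (2 * (Real.cosh τ - 1) / τ ^ 2) * x n i = 0) :
    ∀ n i : ℤ,
      (Tpl α τ h x n i - Tpl α τ h x (n - 1) i) / τ
        - (Real.exp ((n : ℝ) * τ)
              * (1 / (xs h x (n + 1) i * xs h x (n - 1) i) - α ^ 2 * xs h x n i)
            - Real.exp ((n : ℝ) * τ)
              * (1 / (xs h x (n + 1) (i - 1) * xs h x (n - 1) (i - 1))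
                  - α ^ 2 * xs h x n (i - 1))) / h = 0 := by
  intro n i
  have hs := scheme n i
  simp only [xtt, xss, xs, xt, Tpl, Real.cosh_eq] at *
  push_cast
  have e1 : Real.exp (((n : ℝ) + 1) * τ) = Real.exp ((n : ℝ) * τ) * Real.exp τ := by
    rw [← Real.exp_add]; ring_nf
  have e2 : Real.exp (((n : ℝ) - 1) * τ) = Real.exp ((n : ℝ) * τ) * Real.exp (-τ) := by
    rw [← Real.exp_add]; ring_nf
  have e3 : Real.exp (((n : ℝ) - 1 + 1) * τ) = Real.exp ((n : ℝ) * τ) := by ring_nf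
  have h4 : n - 1 + 1 = n := by ring
  have h5 : i - 1 + 1 = i := by ring
  simp only [h4, h5] at hs ⊢
  rw [e1, e2, e3]
  linear_combination (-Real.exp ((n : ℝ) * τ)) * hs
end

section
/- Let α ∈ ℝ, τ > 0, h > 0 and let x : ℤ × ℤ → ℝ be a grid function with x_s(n,i) ≠ 0 for all (n,i), satisfying the invariant scheme for the SMHD equations with parabolic bottom concave down, i.e. with B̌(n,i) = (2(cos τ − 1)/τ²) x(n,i): x_tť(n,i) − α² x_sš(n,i) + [1/(x_s(n+1,i) x_s(n−1,i)) − 1/(x_s(n+1,i−1) x_s(n−1,i−1))]/h − (2(cos τ − 1)/τ²) x(n,i) = 0 for all (n,i). Define T(n,i) = x_t(n,i) sin(t_n) − x(n,i)(sin(t_{n+1}) − sin(t_n))/τ, with t_n = nτ. Then the additional finite-difference conservation law holds: (T(n,i) − T(n−1,i))/τ + ( sin(t_n)[1/(x_s(n+1,i) x_s(n−1,i)) − α² x_s(n,i)] − sin(t_n)[1/(x_s(n+1,i−1) x_s(n−1,i−1)) − α² x_s(n,i−1)] )/h = 0 for all (n,i). -/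
/-- Conserved density of the first additional conservation law for the
parabolic bottom concave down. -/
noncomputable def Tsin (α τ h : ℝ) (x : ℤ → ℤ → ℝ) (n i : ℤ) : ℝ :=
  xt τ x n i * Real.sin ((n : ℝ) * τ)
    - x n i * (Real.sin (((n : ℝ) + 1) * τ) - Real.sin ((n : ℝ) * τ)) / τ

/-- first additional finite-difference conservation law for the
invariant SMHD scheme with parabolic bottom concave down. -/
theorem fd_smhd_parabolic_down_cl1
    (α τ h : ℝ) (hτ : 0 < τ) (hh : 0 < h)
    (x : ℤ → ℤ → ℝ) (hxs : ∀ n i, xs h x n i ≠ 0)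
    (scheme : ∀ n i : ℤ,
      xtt τ x n i - α ^ 2 * xss h x n i
        + (1 / (xs h x (n + 1) i * xs h x (n - 1) i)
            - 1 / (xs h x (n + 1) (i - 1) * xs h x (n - 1) (i - 1))) / h
        - (2 * (Real.cos τ - 1) / τ ^ 2) * x n i = 0) :
    ∀ n i : ℤ,
      (Tsin α τ h x n i - Tsin α τ h x (n - 1) i) / τ
        + (Real.sin ((n : ℝ) * τ)
              * (1 / (xs h x (n + 1) i * xs h x (n - 1) i) - α ^ 2 * xs h x n i)
            - Real.sin ((n : ℝ) * τ)
              * (1 / (xs h x (n + 1) (i - 1) * xs h x (n - 1) (i - 1))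
                  - α ^ 2 * xs h x n (i - 1))) / h = 0 := by
  intro n i
  have hxss : xss h x n i = (xs h x n i - xs h x n (i - 1)) / h := by
    simp only [xss, xs, sub_add_cancel]
    ring
  have h1 := scheme n i
  rw [hxss] at h1
  have key : Real.sin (((n : ℝ) + 1) * τ) + Real.sin (((n : ℝ) - 1) * τ)
      = 2 * Real.cos τ * Real.sin ((n : ℝ) * τ) := by
    have e1 : ((n : ℝ) + 1) * τ = (n : ℝ) * τ + τ := by ring
    have e2 : ((n : ℝ) - 1) * τ = (n : ℝ) * τ - τ := by ring
    rw [e1, e2, Real.sin_add, Real.sin_sub]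
    ring
  simp only [Tsin, xt, xtt] at h1 ⊢
  push_cast at h1 ⊢
  have e3 : ((n : ℝ) - 1 + 1) * τ = (n : ℝ) * τ := by ring
  rw [e3, show n - 1 + 1 = n from by ring]
  linear_combination Real.sin ((n : ℝ) * τ) * h1
    - (x n i / τ ^ 2) * key
end

section
/- Let α ∈ ℝ, τ > 0, h > 0 and let x : ℤ × ℤ → ℝ be a grid function with x_s(n,i) ≠ 0 for all (n,i), satisfying the invariant scheme for the SMHD equations with parabolic bottom concave down, i.e. with B̌(n,i) = (2(cos τ − 1)/τ²) x(n,i): x_tť(n,i) − α² x_sš(n,i) + [1/(x_s(n+1,i) x_s(n−1,i)) − 1/(x_s(n+1,i−1) x_s(n−1,i−1))]/h − (2(cos τ − 1)/τ²) x(n,i) = 0 for all (n,i). Define T(n,i) = x_t(n,i) cos(t_n) − x(n,i)(cos(t_{n+1}) − cos(t_n))/τ, with t_n = nτ. Then the additional finite-difference conservation law holds: (T(n,i) − T(n−1,i))/τ + ( cos(t_n)[1/(x_s(n+1,i) x_s(n−1,i)) − α² x_s(n,i)] − cos(t_n)[1/(x_s(n+1,i−1) x_s(n−1,i−1)) − α²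 x_s(n,i−1)] )/h = 0 for all (n,i). -/
/-- Conserved density of the second additional conservation law for the
parabolic bottom concave down. -/
noncomputable def Tcos (α τ h : ℝ) (x : ℤ → ℤ → ℝ) (n i : ℤ) : ℝ :=
  xt τ x n i * Real.cos ((n : ℝ) * τ)
    - x n i * (Real.cos (((n : ℝ) + 1) * τ) - Real.cos ((n : ℝ) * τ)) / τ

/-- second additional finite-difference conservation law for the
invariant SMHD scheme with parabolic bottom concave down. -/
theorem fd_smhd_parabolic_down_cl2
    (α τ h : ℝ) (hτ : 0 < τ) (hh : 0 < h)
    (x : ℤ → ℤ → ℝ) (hxs : ∀ n i, xs h x n i ≠ 0)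
    (scheme : ∀ n i : ℤ,
      xtt τ x n i - α ^ 2 * xss h x n i
        + (1 / (xs h x (n + 1) i * xs h x (n - 1) i)
            - 1 / (xs h x (n + 1) (i - 1) * xs h x (n - 1) (i - 1))) / h
        - (2 * (Real.cos τ - 1) / τ ^ 2) * x n i = 0) :
    ∀ n i : ℤ,
      (Tcos α τ h x n i - Tcos α τ h x (n - 1) i) / τ
        + (Real.cos ((n : ℝ) * τ)
              * (1 / (xs h x (n + 1) i * xs h x (n - 1) i) - α ^ 2 * xs h x n i)
            - Real.cos ((n : ℝ) * τ)
              * (1 / (xs h x (n + 1) (i - 1) * xs h x (n - 1) (i - 1))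
                  - α ^ 2 * xs h x n (i - 1))) / h = 0 := by
  intro n i
  have S := scheme n i
  have key : Real.cos (((n : ℝ) + 1) * τ) + Real.cos (((n : ℝ) - 1) * τ)
      = 2 * Real.cos ((n : ℝ) * τ) * Real.cos τ := by
    have h1 : ((n : ℝ) + 1) * τ = (n : ℝ) * τ + τ := by ring
    have h2 : ((n : ℝ) - 1) * τ = (n : ℝ) * τ - τ := by ring
    rw [h1, h2, Real.cos_add, Real.cos_sub]; ring
  simp only [xt, xs, xtt, xss, Tcos, sub_add_cancel] at S ⊢
  push_cast at S ⊢
  rw [show ((n : ℝ) - 1 + 1) * τ = (n : ℝ) * τ by ring]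
  linear_combination Real.cos ((n : ℝ) * τ) * S - x n i / τ ^ 2 * key
end

section
/- Let α ∈ ℝ, τ > 0, h > 0, let b : ℝ → ℝ be any function, and let x : ℤ × ℤ → ℝ be a grid function with x_s(n,i) ≠ 0 and x_t(n,i) + x_ť(n,i) ≠ 0 for all (n,i), satisfying the modified scheme for arbitrary bottom topography: x_tť(n,i) − α² x_sš(n,i) + [1/(x_s(n+1,i) x_s(n−1,i)) − 1/(x_s(n+1,i−1) x_s(n−1,i−1))]/h − [ (b(x(n+1,i)) − b(x(n−1,i)))/τ ] / ( x_t(n,i) + x_ť(n,i) ) = 0 for all (n,i). Define T(n,i) = x_t(n,i)² + 1/x_s(n,i) + 1/x_s(n+1,i) + α² x_s(n,i) x_s(n+1,i) − b(x(n+1,i)) − b(x(n,i)) and S(n,i) = ( x_t(n,i+1) + x_t(n−1,i+1) )( 1/(x_s(n+1,i) x_s(n−1,i)) − α² x_s(n,i) ). Then the finite-difference conservation law of energy holds: (T(n,i) − T(n−1,i))/τ + (S(n,i) − S(n,i−1))/h = 0 for all (n,i). -/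
/-- Conserved density of the energy conservation law for arbitrary bottom
topography b. -/
noncomputable def Tarb (α τ h : ℝ) (b : ℝ → ℝ) (x : ℤ → ℤ → ℝ) (n i : ℤ) : ℝ :=
  (xt τ x n i) ^ 2 + 1 / xs h x n i + 1 / xs h x (n + 1) i
    + α ^ 2 * xs h x n i * xs h x (n + 1) i - b (x (n + 1) i) - b (x n i)

/-- Flux of the energy conservation law for arbitrary bottom topography b. -/
noncomputable def Sarb (α τ h : ℝ) (x : ℤ → ℤ → ℝ) (n i : ℤ) : ℝ :=
  (xt τ x n (i + 1) + xt τ x (n - 1) (i + 1))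
    * (1 / (xs h x (n + 1) i * xs h x (n - 1) i) - α ^ 2 * xs h x n i)

/-- finite-difference energy conservation law for the modified
invariant SMHD scheme with arbitrary bottom topography. -/
theorem fd_smhd_energy_arbitrary_bottom
    (α τ h : ℝ) (hτ : 0 < τ) (hh : 0 < h)
    (b : ℝ → ℝ) (x : ℤ → ℤ → ℝ)
    (hxs : ∀ n i, xs h x n i ≠ 0)
    (hxt : ∀ n i, xt τ x n i + xt τ x (n - 1) i ≠ 0)
    (scheme : ∀ n i : ℤ,
      xtt τ x n i - α ^ 2 * xss h x n i
        + (1 / (xs h x (n + 1) i * xs h x (n - 1) i)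
            - 1 / (xs h x (n + 1) (i - 1) * xs h x (n - 1) (i - 1))) / h
        - ((b (x (n + 1) i) - b (x (n - 1) i)) / τ)
            / (xt τ x n i + xt τ x (n - 1) i) = 0) :
    ∀ n i : ℤ,
      (Tarb α τ h b x n i - Tarb α τ h b x (n - 1) i) / τ
        + (Sarb α τ h x n i - Sarb α τ h x n (i - 1)) / h = 0 := by
  intro n i
  have hτ' := hτ.ne'
  have hh' := hh.ne'
  have hn : (n : ℤ) - 1 + 1 = n := by ring
  have hi : (i : ℤ) - 1 + 1 = i := by ring
  have key := scheme n i
  have r1 : xtt τ x n i = (xt τ x n i - xt τ x (n - 1) i) / τ := by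
    unfold xtt xt; simp only [hn]; field_simp; ring
  have r2 : xss h x n i = (xs h x n i - xs h x n (i - 1)) / h := by
    unfold xss xs; simp only [hi]; field_simp; ring
  have r3 : xt τ x n (i + 1) + xt τ x (n - 1) (i + 1)
      = xt τ x n i + xt τ x (n - 1) i
        + h * (xs h x (n + 1) i - xs h x (n - 1) i) / τ := by
    unfold xt xs; simp only [hn]; field_simp; ring
  rw [r1, r2] at key
  have h1 := hxs (n + 1) i
  have h2 := hxs (n - 1) i
  have h4 := hxs (n + 1) (i - 1)
  have h5 := hxs (n - 1) (i - 1)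
  have h7 := hxt n i
  have e1 : (Tarb α τ h b x n i - Tarb α τ h b x (n - 1) i) / τ
        + (Sarb α τ h x n i - Sarb α τ h x n (i - 1)) / h
      = (xt τ x n i + xt τ x (n - 1) i) *
        ((xt τ x n i - xt τ x (n - 1) i) / τ
          - α ^ 2 * ((xs h x n i - xs h x n (i - 1)) / h)
          + (1 / (xs h x (n + 1) i * xs h x (n - 1) i)
              - 1 / (xs h x (n + 1) (i - 1) * xs h x (n - 1) (i - 1))) / h
          - ((b (x (n + 1) i) - b (x (n - 1) i)) / τ)
              / (xt τ x n i + xt τ x (n - 1) i)) := by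
    unfold Tarb Sarb
    simp only [hn, hi]
    rw [r3]
    set u := xt τ x n i
    set v := xt τ x (n - 1) i
    set a1 := xs h x (n + 1) i
    set a2 := xs h x (n - 1) i
    set a3 := xs h x n i
    set a4 := xs h x (n + 1) (i - 1)
    set a5 := xs h x (n - 1) (i - 1)
    set a6 := xs h x n (i - 1)
    field_simp
    ring
  rw [e1, key, mul_zero]
end
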